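/- The polynomial N_{A_n}(q) = (q^{n+2} - 1)/(q^2 - 1) counts, for even n, the number of solutions over the finite field F_q of the system x_1 x_1' = 1 + x_2, x_i x_i' = 1 + x_{i-1} x_{i+1} for 2 ≤ i ≤ n-1, and x_n x_n' = 1 + x_{n-1}, in variables x_1,...,x_n, x_1',...,x_n' ∈ F_q. -/

import Mathlib

open scoped Classical

section ClusterTypeA

open Finset

variable {F : Type} [Field F] [Fintype F]

/-- The number of solutions `z` of `a * z = 1 + p * b`. -/
noncomputable def ccWt (p a b : F) : ℕ :=
  if a ≠ 0 then 1 else if p * b = -1 then Fintype.card F else 0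

/-- Weighted count of sequences of length `m+1` starting with value `a`,
with left boundary value `p` (transfer "matrix" for the path system). -/
noncomputable def GG (p a : F) : ℕ → ℕ
  | 0 => ccWt p a 1
  | m + 1 => ∑ b : F, ccWt p a b * GG a b m

lemma ccWt_ne (p b : F) {a : F} (ha : a ≠ 0) : ccWt p a b = 1 := by simp [ccWt, ha]

lemma GG_zero (p a : F) : GG p a 0 = ccWt p a 1 := rfl

lemma GG_succ (p a : F) (m : ℕ) : GG p a (m+1) = ∑ b : F, ccWt p a b * GG a b m := rfl

lemma GG_ne (p p' : F) {a : F} (ha : a ≠ 0) (m : ℕ) : GG p a m = GG p' a m := by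
  cases m with
  | zero => simp [GG_zero, ccWt, ha]
  | succ m => simp [GG_succ, ccWt, ha]

lemma GG_succ_ne (p : F) {a : F} (ha : a ≠ 0) (m : ℕ) :
    GG p a (m+1) = ∑ b : F, GG a b m := by
  simp [GG_succ, ccWt_ne _ _ ha]

lemma GG_arg_zero_succ {a : F} (ha : a ≠ 0) (m : ℕ) :
    GG a (0:F) (m+1) = Fintype.card F * GG 0 (-a⁻¹) m := by
  rw [GG_succ]
  rw [Finset.sum_eq_single (-a⁻¹)]
  · have : ccWt a (0:F) (-a⁻¹) = Fintype.card F := by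
      simp [ccWt, mul_comm a, neg_mul, inv_mul_cancel₀ ha]
    rw [this]
  · intro b _ hb
    have hc : ccWt a (0:F) b = 0 := by
      have : a * b ≠ -1 := by
        intro h; apply hb; field_simp; linear_combination h
      simp [ccWt, this]
    simp [hc]
  · simp

lemma GG_arg_zero_zero {a : F} : GG a (0:F) 0 = if a = -1 then Fintype.card F else 0 := by
  simp [GG_zero, ccWt]

lemma sum_GG_split (a : F) (m : ℕ) :
    (∑ b : F, (GG a b m : ℤ))
      = (∑ b ∈ Finset.univ.erase (0:F), (GG 1 b m : ℤ)) + GG a 0 m := by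
  rw [← Finset.sum_erase_add Finset.univ _ (Finset.mem_univ (0:F))]
  congr 1
  exact Finset.sum_congr rfl fun b hb => by rw [GG_ne a 1 (Finset.ne_of_mem_erase hb)]

lemma card_erase_zero : ((Finset.univ.erase (0:F)).card : ℤ) = (Fintype.card F : ℤ) - 1 := by
  rw [Finset.card_erase_of_mem (Finset.mem_univ _), Finset.card_univ]
  have : 1 ≤ Fintype.card F := Fintype.card_pos
  push_cast [Nat.cast_sub this]; ring

lemma sum_ind (w : F) (hw : w ≠ 0) (t : ℤ) :
    (∑ b ∈ Finset.univ.erase (0:F), if b = w then t else 0) = t := by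
  rw [Finset.sum_ite_eq' (Finset.univ.erase (0:F)) w (fun _ => t)]
  simp [hw]

lemma neg_inv_eq_iff {a : F} (k : ℕ) :
    (-a⁻¹ = (-1:F)^(k+1)) ↔ a = (-1:F)^(k+2) := by
  rw [neg_eq_iff_eq_neg, inv_eq_iff_eq_inv]
  have h1 : -(-1:F)^(k+1) = (-1:F)^(k+2) := by ring
  have h2 : ((-1:F)^(k+2))⁻¹ = (-1:F)^(k+2) := by rw [← inv_pow, inv_neg_one]
  rw [h1, h2]

/-- The main invariant of the transfer recursion. -/
lemma GG_invariant (k : ℕ) :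
    (∀ a : F, a ≠ 0 → (GG 1 a (2*k) : ℤ) = ∑ j ∈ range (k+1), (Fintype.card F:ℤ)^(2*j)) ∧
    (∀ a : F, a ≠ 0 → (GG 1 a (2*k+1) : ℤ)
        = (Fintype.card F:ℤ)^(k+1) * (∑ j ∈ range (k+1), (Fintype.card F:ℤ)^j)
          - (∑ j ∈ range (k+1), (Fintype.card F:ℤ)^(2*j))
          + if a = (-1:F)^(k+1) then (Fintype.card F:ℤ)^(k+1) else 0) := by
  set q : ℤ := (Fintype.card F : ℤ) with hq
  induction k with
  | zero =>
    constructor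
    · intro a ha
      simp [GG_zero, ccWt_ne _ _ ha]
    · intro a ha
      rw [GG_succ_ne 1 ha 0]
      push_cast [sum_GG_split a 0]
      have h1 : ∀ b ∈ Finset.univ.erase (0:F), (GG 1 b 0 : ℤ) = 1 := by
        intro b hb; simp [GG_zero, ccWt_ne _ _ (Finset.ne_of_mem_erase hb)]
      rw [Finset.sum_congr rfl h1, Finset.sum_const, nsmul_eq_mul, card_erase_zero,
        GG_arg_zero_zero]
      simp only [pow_one, Finset.sum_range_one, ← hq]
      split <;> ring
  | succ k ih =>
    obtain ⟨ihe, iho⟩ := ih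
    have heven : ∀ a : F, a ≠ 0 → (GG 1 a (2*(k+1)) : ℤ)
        = ∑ j ∈ range (k+2), q^(2*j) := by
      intro a ha
      have h2 : 2*(k+1) = (2*k+1)+1 := by ring
      rw [h2, GG_succ_ne 1 ha]
      push_cast [sum_GG_split a (2*k+1)]
      have h1 : ∀ b ∈ Finset.univ.erase (0:F), (GG 1 b (2*k+1) : ℤ)
          = (q^(k+1) * (∑ j ∈ range (k+1), q^j) - (∑ j ∈ range (k+1), q^(2*j)))
            + if b = (-1:F)^(k+1) then q^(k+1) else 0 := by
        intro b hb; rw [iho b (Finset.ne_of_mem_erase hb)]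
      rw [Finset.sum_congr rfl h1, Finset.sum_add_distrib, Finset.sum_const,
        nsmul_eq_mul, card_erase_zero,
        sum_ind ((-1:F)^(k+1)) (by simp) (q^(k+1))]
      have hz : (GG a 0 (2*k+1) : ℤ) = q * GG 1 (-a⁻¹) (2*k) := by
        have h3 : (2*k+1) = (2*k)+1 := rfl
        rw [h3, GG_arg_zero_succ ha, GG_ne 0 1 (by simp [ha]) (2*k)]
        push_cast; ring
      rw [hz, ihe (-a⁻¹) (by simp [ha])]
      rw [Finset.sum_range_succ _ (k+1)]
      have hgeo := geom_sum_mul q (k+1)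
      linear_combination q^(k+1) * hgeo
    refine ⟨heven, ?_⟩
    intro a ha
    have h2 : 2*(k+1)+1 = (2*(k+1))+1 := rfl
    rw [h2, GG_succ_ne 1 ha]
    push_cast [sum_GG_split a (2*(k+1))]
    have h1 : ∀ b ∈ Finset.univ.erase (0:F), (GG 1 b (2*(k+1)) : ℤ)
        = ∑ j ∈ range (k+2), q^(2*j) := by
      intro b hb; rw [heven b (Finset.ne_of_mem_erase hb)]
    rw [Finset.sum_congr rfl h1, Finset.sum_const, nsmul_eq_mul, card_erase_zero]
    have hz : (GG a 0 (2*(k+1)) : ℤ) = q * GG 1 (-a⁻¹) (2*k+1) := by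
      have h3 : (2*(k+1)) = (2*k+1)+1 := by ring
      rw [h3, GG_arg_zero_succ ha, GG_ne 0 1 (by simp [ha]) (2*k+1)]
      push_cast; ring
    rw [hz, iho (-a⁻¹) (by simp [ha])]
    have hind : (if -a⁻¹ = (-1:F)^(k+1) then q^(k+1) else 0)
        = (if a = (-1:F)^(k+2) then q^(k+1) else 0) := by
      rw [neg_inv_eq_iff k]
    rw [hind]
    rw [Finset.sum_range_succ (fun j => q^j) (k+1),
      Finset.sum_range_succ (fun j => q^(2*j)) (k+1)]
    rw [← hq]
    split <;> ring

/-- The total weighted count for a path with `2k+2` vertices. -/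
lemma GG_total (k : ℕ) :
    (∑ a : F, (GG 1 a (2*k+1) : ℤ)) = ∑ j ∈ range (k+2), (Fintype.card F:ℤ)^(2*j) := by
  set q : ℤ := (Fintype.card F : ℤ) with hq
  obtain ⟨ihe, iho⟩ := GG_invariant (F := F) k
  rw [sum_GG_split 1 (2*k+1)]
  have h1 : ∀ b ∈ Finset.univ.erase (0:F), (GG 1 b (2*k+1) : ℤ)
      = (q^(k+1) * (∑ j ∈ range (k+1), q^j) - (∑ j ∈ range (k+1), q^(2*j)))
        + if b = (-1:F)^(k+1) then q^(k+1) else 0 := by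
    intro b hb; rw [iho b (Finset.ne_of_mem_erase hb)]
  rw [Finset.sum_congr rfl h1, Finset.sum_add_distrib, Finset.sum_const,
    nsmul_eq_mul, card_erase_zero,
    sum_ind ((-1:F)^(k+1)) (by simp) (q^(k+1))]
  have hz : (GG 1 (0:F) (2*k+1) : ℤ) = q * GG 1 (-1:F) (2*k) := by
    have h3 : (2*k+1) = (2*k)+1 := rfl
    have h4 : -(1:F)⁻¹ = -1 := by simp
    rw [h3, GG_arg_zero_succ (one_ne_zero (α := F)), h4,
      GG_ne 0 1 (by simp : (-1:F) ≠ 0) (2*k)]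
    push_cast; ring
  rw [hz, ihe (-1:F) (by simp)]
  rw [Finset.sum_range_succ (fun j => q^(2*j)) (k+1)]
  have hgeo := geom_sum_mul q (k+1)
  linear_combination q^(k+1) * hgeo

/- Counting solutions of the equations, vertex by vertex. -/

lemma card_line (a b : F) : Fintype.card {z : F // a * z = b}
    = if a ≠ 0 then 1 else if b = 0 then Fintype.card F else 0 := by
  split_ifs with h1 h2
  · rw [Fintype.card_eq_one_iff]
    refine ⟨⟨a⁻¹ * b, by field_simp⟩, ?_⟩
    rintro ⟨z, hz⟩
    apply Subtype.ext
    show z = a⁻¹ * b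
    rw [← hz]
    field_simp
  · rw [not_not] at h1
    subst h1 h2
    exact Fintype.card_congr (Equiv.subtypeUnivEquiv (fun z => by simp))
  · rw [not_not] at h1
    subst h1
    rw [Fintype.card_eq_zero_iff]
    exact ⟨fun z => h2 (by rw [← z.2, zero_mul])⟩

lemma card_eq_sum (n : ℕ) (B : (Fin n → F) → Fin n → F) :
    Nat.card {p : (Fin n → F) × (Fin n → F) // ∀ i, p.1 i * p.2 i = B p.1 i}
      = ∑ x : Fin n → F, ∏ i, Fintype.card {z : F // x i * z = B x i} := by
  have e : {p : (Fin n → F) × (Fin n → F) // ∀ i, p.1 i * p.2 i = B p.1 i}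
      ≃ Σ x : Fin n → F, ∀ i, {z : F // x i * z = B x i} :=
    { toFun := fun p => ⟨p.1.1, fun i => ⟨p.1.2 i, p.2 i⟩⟩
      invFun := fun s => ⟨(s.1, fun i => (s.2 i).1), fun i => (s.2 i).2⟩
      left_inv := fun p => rfl
      right_inv := fun s => rfl }
  rw [Nat.card_eq_fintype_card, Fintype.card_congr e, Fintype.card_sigma]
  exact Finset.sum_congr rfl fun x _ => Fintype.card_pi

/- The neighbour structure of the path graph. -/

def preV {n : ℕ} (p : F) (x : Fin n → F) (i : Fin n) : F :=
  if i.val = 0 then p else x ⟨i.val - 1, Nat.lt_of_le_of_lt (Nat.sub_le _ _) i.isLt⟩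

def postV {n : ℕ} (x : Fin n → F) (i : Fin n) : F :=
  if h : i.val + 1 < n then x ⟨i.val + 1, h⟩ else 1

noncomputable def Wt (p : F) {n : ℕ} (x : Fin n → F) (i : Fin n) : ℕ :=
  ccWt (preV p x i) (x i) (postV x i)

lemma prod_adj (n : ℕ) (x : Fin n → F) (i : Fin n) :
    ∏ j ∈ Finset.univ.filter (fun j => (SimpleGraph.pathGraph n).Adj i j), x j
      = preV 1 x i * postV x i := by
  by_cases h0 : i.val = 0
  · by_cases h1 : i.val + 1 < n
    · have hf : Finset.univ.filter (fun j => (SimpleGraph.pathGraph n).Adj i j)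
          = {⟨i.val + 1, h1⟩} := by
        ext j
        simp only [Finset.mem_filter, Finset.mem_univ, true_and, Finset.mem_singleton,
          SimpleGraph.pathGraph_adj, Fin.ext_iff]
        omega
      rw [hf, Finset.prod_singleton, preV, postV, if_pos h0, dif_pos h1, one_mul]
    · have hf : Finset.univ.filter (fun j => (SimpleGraph.pathGraph n).Adj i j)
          = (∅ : Finset (Fin n)) := by
        ext j
        simp only [Finset.mem_filter, Finset.mem_univ, true_and, Finset.notMem_empty,
          iff_false, SimpleGraph.pathGraph_adj]
        have := j.isLt
        omega
      rw [hf, Finset.prod_empty, preV, postV, if_pos h0, dif_neg h1, one_mul]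
  · by_cases h1 : i.val + 1 < n
    · have hf : Finset.univ.filter (fun j => (SimpleGraph.pathGraph n).Adj i j)
          = {⟨i.val - 1, Nat.lt_of_le_of_lt (Nat.sub_le _ _) i.isLt⟩, ⟨i.val + 1, h1⟩} := by
        ext j
        simp only [Finset.mem_filter, Finset.mem_univ, true_and, Finset.mem_insert,
          Finset.mem_singleton, SimpleGraph.pathGraph_adj, Fin.ext_iff]
        omega
      rw [hf, Finset.prod_pair (by simp only [Fin.ne_iff_vne]; omega),
        preV, postV, if_neg h0, dif_pos h1]
    · have hf : Finset.univ.filter (fun j => (SimpleGraph.pathGraph n).Adj i j)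
          = {⟨i.val - 1, Nat.lt_of_le_of_lt (Nat.sub_le _ _) i.isLt⟩} := by
        ext j
        simp only [Finset.mem_filter, Finset.mem_univ, true_and, Finset.mem_singleton,
          SimpleGraph.pathGraph_adj, Fin.ext_iff]
        have := j.isLt
        omega
      rw [hf, Finset.prod_singleton, preV, postV, if_neg h0, dif_neg h1, mul_one]

/- Evaluation of `Fin.cons` and the splitting of the weight product. -/

lemma cons_eval {m : ℕ} (a : F) (y : Fin m → F) (j : ℕ) (h : j < m + 1) :
    (Fin.cons a y : Fin (m+1) → F) ⟨j, h⟩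
      = if hj : j = 0 then a else y ⟨j - 1, by omega⟩ := by
  cases j with
  | zero => simp
  | succ jj =>
    rw [dif_neg (Nat.succ_ne_zero jj)]
    have e : (⟨jj+1, h⟩ : Fin (m+1)) = Fin.succ ⟨jj, Nat.lt_of_succ_lt_succ h⟩ := rfl
    rw [e, Fin.cons_succ]
    congr 1

lemma Wt_head (p a : F) {m : ℕ} (y : Fin (m+1) → F) :
    Wt p (Fin.cons a y) (0 : Fin (m+2)) = ccWt p a (y 0) := by
  have h1 : preV p (Fin.cons a y) (0 : Fin (m+2)) = p := by simp [preV]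
  have h2 : (Fin.cons a y : Fin (m+2) → F) 0 = a := by simp
  have h3 : postV (Fin.cons a y) (0 : Fin (m+2)) = y 0 := by
    unfold postV
    rw [dif_pos (show (0 : Fin (m+2)).val + 1 < m+2 by simp), cons_eval]
    simp
  rw [Wt, h1, h2, h3]

lemma Wt_succ (p a : F) {m : ℕ} (y : Fin (m+1) → F) (i : Fin (m+1)) :
    Wt p (Fin.cons a y) i.succ = Wt a y i := by
  have h2 : (Fin.cons a y : Fin (m+2) → F) i.succ = y i := by simp
  have h1 : preV p (Fin.cons a y) i.succ = preV a y i := by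
    simp only [preV, Fin.val_succ]
    rw [if_neg (by omega)]
    rw [cons_eval]
    by_cases hi : i.val = 0
    · rw [dif_pos (by omega), if_pos hi]
    · rw [dif_neg (by omega), if_neg hi]
      congr 1
  have h3 : postV (Fin.cons a y) i.succ = postV y i := by
    simp only [postV, Fin.val_succ]
    by_cases hi : i.val + 1 < m + 1
    · rw [dif_pos (by omega), dif_pos hi, cons_eval]
      rw [dif_neg (by omega)]
      congr 1
    · rw [dif_neg (by omega), dif_neg hi]
  rw [Wt, h1, h2, h3]
  rfl

lemma sum_W : ∀ (m : ℕ) (p a : F),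
    (∑ y : Fin m → F, ∏ i : Fin (m+1), Wt p (Fin.cons a y) i) = GG p a m := by
  intro m
  induction m with
  | zero =>
    intro p a
    rw [Fintype.sum_unique, Fin.prod_univ_one]
    simp [Wt, preV, postV, GG_zero]
  | succ m ih =>
    intro p a
    rw [← Equiv.sum_comp (Fin.consEquiv (fun _ : Fin (m+1) => F)), Fintype.sum_prod_type]
    have hstep : ∀ (b : F) (z : Fin m → F),
        (∏ i : Fin (m+2), Wt p (Fin.cons a ((Fin.consEquiv (fun _ : Fin (m+1) => F)) (b, z))) i)
          = ccWt p a b * ∏ i : Fin (m+1), Wt a (Fin.cons b z) i := by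
      intro b z
      have he : (Fin.consEquiv (fun _ : Fin (m+1) => F)) (b, z) = Fin.cons b z := rfl
      rw [he, Fin.prod_univ_succ, Wt_head, Fin.cons_zero]
      exact congrArg _ (Finset.prod_congr rfl fun i _ => Wt_succ p a (Fin.cons b z) i)
    calc (∑ b : F, ∑ z : Fin m → F,
            ∏ i : Fin (m+2), Wt p (Fin.cons a ((Fin.consEquiv (fun _ : Fin (m+1) => F)) (b, z))) i)
        = ∑ b : F, ∑ z : Fin m → F, ccWt p a b * ∏ i : Fin (m+1), Wt a (Fin.cons b z) i := by
          exact Finset.sum_congr rfl fun b _ => Finset.sum_congr rfl fun z _ => hstep b z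
      _ = ∑ b : F, ccWt p a b * ∑ z : Fin m → F, ∏ i : Fin (m+1), Wt a (Fin.cons b z) i := by
          exact Finset.sum_congr rfl fun b _ => (Finset.mul_sum _ _ _).symm
      _ = ∑ b : F, ccWt p a b * GG a b m := by
          exact Finset.sum_congr rfl fun b _ => by rw [ih a b]
      _ = GG p a (m+1) := (GG_succ p a m).symm

lemma sum_W_total (m : ℕ) :
    (∑ x : Fin (m+1) → F, ∏ i : Fin (m+1), Wt 1 x i) = ∑ a : F, GG 1 a m := by
  rw [← Equiv.sum_comp (Fin.consEquiv (fun _ : Fin (m+1) => F)), Fintype.sum_prod_type]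
  exact Finset.sum_congr rfl fun a _ => sum_W m 1 a

end ClusterTypeA

/-- For even `n`, the number of `F_q`-points of the cluster variety of type
`A_n` (equations `x_i x_i' = 1 + ∏_{j ~ i} x_j` over the path graph) is
`(q^{n+2} - 1)/(q^2 - 1)`. -/
theorem card_typeA_even (F : Type) [Field F] [Fintype F] (n : ℕ)
    (hn : 0 < n) (he : Even n) :
    Nat.card {p : (Fin n → F) × (Fin n → F) //
        ∀ i : Fin n, p.1 i * p.2 i =
          1 + ∏ j ∈ Finset.univ.filter (fun j => (SimpleGraph.pathGraph n).Adj i j), p.1 j}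
      * (Fintype.card F ^ 2 - 1)
      = Fintype.card F ^ (n + 2) - 1 := by
  obtain ⟨k, rfl⟩ : ∃ k, n = 2*k+2 := by
    obtain ⟨t, ht⟩ := he
    exact ⟨t - 1, by omega⟩
  set q : ℕ := Fintype.card F with hq
  -- Step 1: the number of solutions as a weighted sum over `x`.
  have hcard : Nat.card {p : (Fin (2*k+2) → F) × (Fin (2*k+2) → F) //
        ∀ i : Fin (2*k+2), p.1 i * p.2 i =
          1 + ∏ j ∈ Finset.univ.filter (fun j => (SimpleGraph.pathGraph (2*k+2)).Adj i j), p.1 j}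
      = ∑ a : F, GG 1 a (2*k+1) := by
    rw [card_eq_sum (2*k+2)
      (fun x i => 1 + ∏ j ∈ Finset.univ.filter
        (fun j => (SimpleGraph.pathGraph (2*k+2)).Adj i j), x j)]
    have hfac : ∀ (x : Fin (2*k+2) → F) (i : Fin (2*k+2)),
        Fintype.card {z : F // x i * z
            = 1 + ∏ j ∈ Finset.univ.filter
                (fun j => (SimpleGraph.pathGraph (2*k+2)).Adj i j), x j}
          = Wt 1 x i := by
      intro x i
      rw [card_line, prod_adj, Wt, ccWt]
      by_cases hx : x i ≠ 0
      · rw [if_pos hx, if_pos hx]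
      · rw [if_neg hx, if_neg hx]
        have hiff : (1 + preV 1 x i * postV x i = 0) ↔ (preV 1 x i * postV x i = -1) := by
          constructor <;> intro h <;> linear_combination h
        by_cases hb : preV 1 x i * postV x i = -1
        · rw [if_pos hb, if_pos (hiff.mpr hb)]
        · rw [if_neg hb, if_neg (fun h => hb (hiff.mp h))]
    have : (∑ x : Fin (2*k+2) → F, ∏ i, Fintype.card {z : F // x i * z
            = 1 + ∏ j ∈ Finset.univ.filter
                (fun j => (SimpleGraph.pathGraph (2*k+2)).Adj i j), x j})
        = ∑ x : Fin (2*k+2) → F, ∏ i, Wt 1 x i := by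
      exact Finset.sum_congr rfl fun x _ =>
        Finset.prod_congr rfl fun i _ => hfac x i
    rw [this]
    have h22 : 2*k+2 = (2*k+1)+1 := rfl
    exact h22 ▸ sum_W_total (2*k+1)
  rw [hcard]
  -- Step 2: evaluate the weighted sum and conclude.
  have hq1 : 1 ≤ q := Fintype.card_pos
  have h2 : 1 ≤ q^2 := Nat.one_le_pow _ _ hq1
  have hn2 : 1 ≤ q^(2*k+2+2) := Nat.one_le_pow _ _ hq1
  apply Nat.cast_injective (R := ℤ)
  push_cast [Nat.cast_sub h2, Nat.cast_sub hn2]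
  rw [GG_total (F := F) k]
  have : (∑ j ∈ Finset.range (k+2), (q:ℤ)^(2*j)) = ∑ j ∈ Finset.range (k+2), ((q:ℤ)^2)^j := by
    exact Finset.sum_congr rfl fun j _ => by rw [← pow_mul]
  rw [this]
  have hgeo := geom_sum_mul ((q:ℤ)^2) (k+2)
  rw [hgeo, ← pow_mul]
  ring_nf
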